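/- Let G be a bipartite planar graph and let M be a matching in G. Then the subgraph of F(G) induced by the edges of M is bipartite. -/

import Mathlib

open SimpleGraph

variable {V : Type*}

/-- Four distinct vertices forming a 4-cycle in `G`. -/
def IsC4 (G : SimpleGraph V) (a b c d : V) : Prop :=
  a ≠ b ∧ a ≠ c ∧ a ≠ d ∧ b ≠ c ∧ b ≠ d ∧ c ≠ d ∧
    G.Adj a b ∧ G.Adj b c ∧ G.Adj c d ∧ G.Adj d a

/-- A proper edge coloring of `G` in which every 4-cycle is rainbow. -/
def IsBColoring (G : SimpleGraph V) {α : Type*} (C : Sym2 V → α) : Prop :=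
  (∀ a b c : V, G.Adj a b → G.Adj a c → b ≠ c → C s(a, b) ≠ C s(a, c)) ∧
  (∀ a b c d : V, IsC4 G a b c d →
    C s(a, b) ≠ C s(b, c) ∧ C s(a, b) ≠ C s(c, d) ∧ C s(a, b) ≠ C s(d, a) ∧
    C s(b, c) ≠ C s(c, d) ∧ C s(b, c) ≠ C s(d, a) ∧ C s(c, d) ≠ C s(d, a))

/-- The minimum number of colors in a B-coloring of `G`. -/
noncomputable def qB (G : SimpleGraph V) : ℕ :=
  sInf {n | ∃ C : Sym2 V → Fin n, IsBColoring G C}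

/-- `e` and `f` are opposite edges of some 4-cycle of `G`. -/
def OppC4 (G : SimpleGraph V) (e f : Sym2 V) : Prop :=
  ∃ a b c d : V, IsC4 G a b c d ∧ e = s(a, b) ∧ f = s(c, d)

/-- Two edges (as unordered pairs) share no vertex. -/
def EdgeDisjoint (e f : Sym2 V) : Prop := ∀ v : V, v ∈ e → v ∉ f

/-- The graph `F(G)` on the edges of `G`: two vertex-disjoint edges are adjacent
iff they are opposite edges of a 4-cycle of `G`. -/
def Fgraph (G : SimpleGraph V) : SimpleGraph G.edgeSet :=
  SimpleGraph.fromRel fun e f =>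
    EdgeDisjoint (e : Sym2 V) (f : Sym2 V) ∧ OppC4 G (e : Sym2 V) (f : Sym2 V)

/-- The extended line graph `L⁺(G)`: edges of `G` are adjacent if they share an
endpoint or are opposite edges of a 4-cycle of `G`. -/
def Lplus (G : SimpleGraph V) : SimpleGraph G.edgeSet :=
  SimpleGraph.fromRel fun e f =>
    (∃ v : V, v ∈ (e : Sym2 V) ∧ v ∈ (f : Sym2 V)) ∨ OppC4 G (e : Sym2 V) (f : Sym2 V)

/-- `H` is a minor of `G`, via branch sets. -/
def HasMinor {W : Type*} (G : SimpleGraph V) (H : SimpleGraph W) : Prop :=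
  ∃ B : W → Set V,
    (∀ w, (G.induce (B w)).Connected) ∧
    (∀ w₁ w₂, w₁ ≠ w₂ → Disjoint (B w₁) (B w₂)) ∧
    (∀ w₁ w₂, H.Adj w₁ w₂ → ∃ v₁ ∈ B w₁, ∃ v₂ ∈ B w₂, G.Adj v₁ v₂)

/-- Planarity via Wagner's theorem: no `K₅` minor and no `K₃,₃` minor. -/
def IsPlanar (G : SimpleGraph V) : Prop :=
  ¬ HasMinor G (completeGraph (Fin 5)) ∧
    ¬ HasMinor G (completeBipartiteGraph (Fin 3) (Fin 3))

/-- Outerplanarity: no `K₄` minor and no `K₂,₃` minor. -/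
def IsOuterplanar (G : SimpleGraph V) : Prop :=
  ¬ HasMinor G (completeGraph (Fin 4)) ∧
    ¬ HasMinor G (completeBipartiteGraph (Fin 2) (Fin 3))

/-- `G` is 2-connected: at least 3 vertices and removing any vertex leaves it connected. -/
def IsTwoConnected (G : SimpleGraph V) : Prop :=
  3 ≤ Nat.card V ∧ ∀ v : V, (G.induce {u | u ≠ v}).Connected

/-- `K₄` minus one edge, on `Fin 4` (the edge between `2` and `3` removed). -/
def K4e : SimpleGraph (Fin 4) :=
  SimpleGraph.fromRel fun x y => s(x, y) ≠ s((2 : Fin 4), (3 : Fin 4))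

/-- The chromatic index: minimum number of colors in a proper edge coloring. -/
noncomputable def chromIndex (G : SimpleGraph V) : ℕ :=
  sInf {n | ∃ C : Sym2 V → Fin n,
    ∀ a b c : V, G.Adj a b → G.Adj a c → b ≠ c → C s(a, b) ≠ C s(a, c)}

/-- `K₆` minus a perfect matching, on `Fin 6` (the matching `01, 23, 45` removed). -/
def K6mM : SimpleGraph (Fin 6) :=
  SimpleGraph.fromRel fun x y => (x : ℕ) / 2 ≠ (y : ℕ) / 2

/-- A path `v₀v₁v₂v₃` together with a vertex `4` adjacent to all four path vertices. -/
def FanGraph : SimpleGraph (Fin 5) :=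
  SimpleGraph.fromRel fun x y =>
    ((x : ℕ) + 1 = (y : ℕ) ∧ (y : ℕ) ≤ 3) ∨ (x : ℕ) = 4



section AuxLemmas

open Walk

variable {W : Type*} {H : SimpleGraph W}

lemma path_edge_end {w u : W} (q : H.Walk w u) (hq : q.IsPath)
    (he : s(u, w) ∈ q.edges) : q.length = 1 := by
  induction q with
  | nil => simp at he
  | @cons a y b h' q' ih =>
    rw [Walk.cons_isPath_iff] at hq
    rw [Walk.edges_cons, List.mem_cons] at he
    rcases he with he | he
    · rw [Sym2.eq_iff] at he
      rcases he with ⟨h1, h2⟩ | ⟨h1, h2⟩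
      · exact absurd (h1 ▸ q'.end_mem_support) hq.2
      · subst h1
        have : q' = Walk.nil := Walk.isPath_iff_eq_nil.mp hq.1
        simp [this]
    · exact absurd (Walk.snd_mem_support_of_mem_edges q' he) hq.2

lemma odd_closed_walk_cycle :
    ∀ n {u : W} (p : H.Walk u u), p.length = n → Odd p.length →
      ∃ (v : W) (c : H.Walk v v), c.IsCycle ∧ Odd c.length := by
  intro n
  induction n using Nat.strong_induction_on with
  | _ n ih =>
    intro u p hlen hodd
    classical
    by_cases hnd : p.support.tail.Nodup
    · cases p with
      | nil => rw [Walk.length_nil] at hlen; subst hlen; simp [Nat.odd_iff] at hodd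
      | @cons _ w _ h q =>
        have hq : q.IsPath := (Walk.isPath_def q).mpr (by simpa using hnd)
        by_cases hew : s(u, w) ∈ q.edges
        · have h1 : q.length = 1 := path_edge_end q hq hew
          rw [Walk.length_cons, h1] at hodd
          norm_num [Nat.odd_iff] at hodd
        · exact ⟨u, Walk.cons h q, (Walk.cons_isCycle_iff q h).mpr ⟨hq, hew⟩,
            hlen ▸ hodd⟩
    · obtain ⟨x, hdup⟩ := List.exists_duplicate_iff_not_nodup.mpr hnd
      have hxmem : x ∈ p.support := List.mem_of_mem_tail (List.Duplicate.mem hdup)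
      have hcount : 2 ≤ p.support.tail.count x := List.duplicate_iff_two_le_count.mp hdup
      set p' := p.rotate x hxmem with hp'
      have hlen' : p'.length = p.length := by
        have h1 := congrArg Walk.length (p.take_spec hxmem)
        rw [Walk.length_append] at h1
        have h2 : p'.length = (p.dropUntil x hxmem).length + (p.takeUntil x hxmem).length := by
          rw [hp', Walk.rotate, Walk.length_append]
        omega
      have hcount' : 2 ≤ p'.support.tail.count x := by
        have hrot := p.support_rotate x hxmem
        rw [List.Perm.count_eq hrot.perm]
        exact hcount
      cases p'' : p' with
      | nil =>
        rw [p''] at hlen'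
        rw [← hlen'] at hodd
        simp [Nat.odd_iff] at hodd
      | @cons _ y _ h' q' =>
        rw [p''] at hcount' hlen'
        have hxq : x ∈ q'.support := by
          rw [Walk.support_cons] at hcount'
          simp only [List.tail_cons] at hcount'
          exact List.count_pos_iff.mp (by omega)
        set t2 := q'.takeUntil x hxq with ht2
        set d2 := q'.dropUntil x hxq with hd2
        have hspec2 : t2.append d2 = q' := q'.take_spec hxq
        have hct : t2.support.count x = 1 := q'.count_support_takeUntil_eq_one hxq
        have hlsum : t2.length + d2.length = q'.length :=
          by rw [← congrArg Walk.length hspec2, Walk.length_append]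
        have hd2len : 1 ≤ d2.length := by
          rcases Nat.eq_zero_or_pos d2.length with h0 | h1
          · exfalso
            have hd2nil : d2.support.tail = [] := by
              have : d2 = Walk.nil := Walk.Nil.eq_nil (Walk.nil_iff_length_eq.mpr h0)
              rw [this]; rfl
            have : q'.support.count x = t2.support.count x := by
              rw [← hspec2, Walk.support_append, List.count_append, hd2nil]
              simp
            rw [Walk.support_cons, List.tail_cons] at hcount'
            omega
          · exact h1
        let c1 : H.Walk x x := Walk.cons h' t2
        have hl1 : c1.length = t2.length + 1 := Walk.length_cons _ _
        have hsum : c1.length + d2.length = n := by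
          rw [hl1, ← hlen, ← hlen', Walk.length_cons]
          omega
        have hn1 : c1.length < n := by omega
        have hn2 : d2.length < n := by rw [← hsum, hl1]; omega
        rw [hlen] at hodd
        rw [Nat.odd_iff] at hodd
        by_cases ho1 : Odd c1.length
        · exact ih c1.length hn1 c1 rfl ho1
        · refine ih d2.length hn2 d2 rfl ?_
          rw [Nat.odd_iff] at ho1 ⊢
          omega

lemma colorable_of_no_odd_closed_walk
    (h : ∀ (u : W) (p : H.Walk u u), ¬ Odd p.length) : H.Colorable 2 := by
  classical
  let f : W → Fin 2 := fun v =>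
    if Odd (H.dist (Quot.out (H.connectedComponentMk v)) v) then 1 else 0
  refine ⟨SimpleGraph.Coloring.mk f ?_⟩
  intro a b hadj hEq
  have hcomp : H.connectedComponentMk a = H.connectedComponentMk b :=
    SimpleGraph.ConnectedComponent.sound hadj.reachable
  simp only [f] at hEq
  rw [hcomp] at hEq
  set r := Quot.out (H.connectedComponentMk b) with hrdef
  have hmkr : H.connectedComponentMk r = H.connectedComponentMk b := by
    exact Quot.out_eq _
  have hra : H.Reachable r a :=
    SimpleGraph.ConnectedComponent.exact (hmkr.trans hcomp.symm)
  have hrb : H.Reachable r b := SimpleGraph.ConnectedComponent.exact hmkr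
  obtain ⟨p, hp⟩ := hra.exists_walk_length_eq_dist
  obtain ⟨q, hq⟩ := hrb.exists_walk_length_eq_dist
  have hpar : (H.dist r a) % 2 = (H.dist r b) % 2 := by
    by_cases h1 : Odd (H.dist r a) <;> by_cases h2 : Odd (H.dist r b) <;>
      rw [Nat.odd_iff] at h1 h2 <;> simp only [Nat.odd_iff, h1, h2, if_pos, if_neg] at hEq <;>
      first
        | omega
        | (exfalso; revert hEq; simp [h1, h2, Nat.odd_iff])
  have hodd : Odd ((p.append (Walk.cons hadj q.reverse)).length) := by
    rw [Walk.length_append, Walk.length_cons, Walk.length_reverse, hp, hq, Nat.odd_iff]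
    omega
  exact h r _ hodd

lemma walk_support_map {u v : W} (p : H.Walk u v) :
    p.support = (List.range (p.length + 1)).map p.getVert := by
  induction p with
  | nil => rfl
  | @cons a b c hab q ih =>
    rw [Walk.support_cons, Walk.length_cons, ih]
    conv_rhs => rw [List.range_succ_eq_map]
    rw [List.map_cons, List.map_map]
    congr 1

lemma cycle_getVert_inj {u : W} {c : H.Walk u u} (hc : c.IsCycle) {i j : ℕ}
    (hi : i < c.length) (hj : j < c.length) (h : c.getVert i = c.getVert j) : i = j := by
  have hnd : c.support.tail.Nodup := hc.support_nodup
  rw [walk_support_map, List.range_succ_eq_map, List.map_cons, List.tail_cons,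
    List.map_map] at hnd
  have hinj := List.inj_on_of_nodup_map hnd
  have key : ∀ a b : ℕ, a < c.length → b < c.length →
      c.getVert (a + 1) = c.getVert (b + 1) → a = b := by
    intro a b ha hb hab
    exact hinj (List.mem_range.mpr ha) (List.mem_range.mpr hb) (by simpa using hab)
  rcases Nat.eq_zero_or_pos i with hi0 | hip <;> rcases Nat.eq_zero_or_pos j with hj0 | hjp
  · omega
  · exfalso
    subst hi0
    have h0 : c.getVert c.length = c.getVert j :=
      (Walk.getVert_length c).trans ((Walk.getVert_zero c).symm.trans h)
    have := key (c.length - 1) (j - 1) (by omega) (by omega)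
      (by rw [Nat.sub_add_cancel (by omega), Nat.sub_add_cancel (by omega)]; exact h0)
    omega
  · exfalso
    subst hj0
    have h0 : c.getVert i = c.getVert c.length :=
      h.trans ((Walk.getVert_zero c).trans (Walk.getVert_length c).symm)
    have := key (i - 1) (c.length - 1) (by omega) (by omega)
      (by rw [Nat.sub_add_cancel (by omega), Nat.sub_add_cancel (by omega)]; exact h0)
    omega
  · have := key (i - 1) (j - 1) (by omega) (by omega)
      (by rw [Nat.sub_add_cancel (by omega), Nat.sub_add_cancel (by omega)]; exact h)
    omega

lemma induce_path_connected {V : Type*} (G : SimpleGraph V) (R : ℕ → V) (a b : ℕ)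
    (hab : a ≤ b) (hadj : ∀ p, a ≤ p → p < b → G.Adj (R p) (R (p + 1))) :
    (G.induce (R '' Set.Icc a b)).Connected := by
  have hmem : ∀ p, a ≤ p → p ≤ b → R p ∈ R '' Set.Icc a b :=
    fun p h1 h2 => ⟨p, ⟨h1, h2⟩, rfl⟩
  have hreach : ∀ p (h1 : a ≤ p) (h2 : p ≤ b),
      (G.induce (R '' Set.Icc a b)).Reachable ⟨R a, hmem a le_rfl hab⟩ ⟨R p, hmem p h1 h2⟩ := by
    intro p h1 h2
    induction p, h1 using Nat.le_induction with
    | base => exact SimpleGraph.Reachable.refl _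
    | succ m hm ih =>
      refine (ih (by omega)).trans ?_
      exact SimpleGraph.Adj.reachable (by simp [hadj m hm (by omega)])
  rw [SimpleGraph.connected_iff]
  refine ⟨?_, ⟨⟨R a, hmem a le_rfl hab⟩⟩⟩
  intro x y
  obtain ⟨x, ⟨px, hpx, rfl⟩⟩ := x
  obtain ⟨y, ⟨py, hpy, rfl⟩⟩ := y
  exact (hreach px hpx.1 hpx.2).symm.trans (hreach py hpy.1 hpy.2)

lemma oppC4_symm {V : Type*} {G : SimpleGraph V} {e f : Sym2 V} (h : OppC4 G e f) :
    OppC4 G f e := by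
  obtain ⟨a, b, c, d, ⟨hab, hac, had, hbc, hbd, hcd, Aab, Abc, Acd, Ada⟩, he, hf⟩ := h
  exact ⟨c, d, a, b, ⟨hcd, hac.symm, hbc.symm, had.symm, hbd.symm, hab, Acd, Ada, Aab, Abc⟩,
    hf, he⟩

end AuxLemmas

theorem Fgraph_matching_bipartite {V : Type*} [Fintype V] (G : SimpleGraph V)
    (hG : IsPlanar G) (hbip : G.Colorable 2) (M : Set (Sym2 V)) (hM : M ⊆ G.edgeSet)
    (hmatch : ∀ e ∈ M, ∀ f ∈ M, e ≠ f → EdgeDisjoint e f) :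
    ((Fgraph G).induce {e : G.edgeSet | (e : Sym2 V) ∈ M}).Colorable 2 := by
  classical
  apply colorable_of_no_odd_closed_walk
  intro e₀ p hoddp
  exfalso
  obtain ⟨v0, cw, hcyc, hcodd⟩ := odd_closed_walk_cycle p.length p rfl hoddp
  set n := cw.length with hn
  have hn3 : 3 ≤ n := hcyc.three_le_length
  have hn0 : 0 < n := by omega
  have hnodd : n % 2 = 1 := Nat.odd_iff.mp hcodd
  -- bipartition coloring
  obtain ⟨col⟩ := hbip
  have hfin2 : ∀ t : Fin 2, t ≠ 0 → t = 1 := by decide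
  have hdecomp : ∀ e : G.edgeSet,
      ∃ x y : V, (e : Sym2 V) = s(x, y) ∧ G.Adj x y ∧ col x = 0 ∧ col y = 1 := by
    rintro ⟨e, he⟩
    induction e with
    | _ x y =>
      have hadj : G.Adj x y := he
      have hne : col x ≠ col y := col.valid hadj
      by_cases hx : col x = 0
      · exact ⟨x, y, rfl, hadj, hx, hfin2 _ fun h0 => hne (hx.trans h0.symm)⟩
      · refine ⟨y, x, Sym2.eq_swap, hadj.symm, ?_, hfin2 _ hx⟩
        by_contra hy
        exact hne ((hfin2 _ hx).trans ((hfin2 _ hy)).symm)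
  choose Uf Wf hsf hadjf hUc hWc using hdecomp
  -- the sequence of matching edges along the cycle
  set Ed : ℕ → G.edgeSet := fun i => ((cw.getVert (i % n) : {e : G.edgeSet | (e : Sym2 V) ∈ M}) : G.edgeSet) with hEd
  have hEM : ∀ i, (Ed i : Sym2 V) ∈ M := fun i => (cw.getVert (i % n)).2
  have hEd_mod : ∀ i, Ed (i % n) = Ed i := by
    intro i
    have h0 : i % n % n = i % n := Nat.mod_mod_of_dvd i (dvd_refl n)
    simp only [hEd, h0]
  have hEd_shift : ∀ i, Ed (i % n + 1) = Ed (i + 1) := by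
    intro i
    have h0 : (i % n + 1) % n = (i + 1) % n := Nat.mod_add_mod i n 1
    simp only [hEd, h0]
  have hEd_per : ∀ i, Ed (i + n) = Ed i := by
    intro i
    have h0 : (i + n) % n = i % n := Nat.add_mod_right i n
    simp only [hEd, h0]
  set U : ℕ → V := fun i => Uf (Ed i) with hU
  set Wv : ℕ → V := fun i => Wf (Ed i) with hW
  -- adjacency in Fgraph along the cycle
  have hFadj : ∀ i, i < n → (Fgraph G).Adj (Ed i) (Ed (i + 1)) := by
    intro i hi
    have hadj := cw.adj_getVert_succ (show i < cw.length from hi)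
    have hgv : (Ed i) = ((cw.getVert i : {e : G.edgeSet | (e : Sym2 V) ∈ M}) : G.edgeSet) := by
      have h0 : i % n = i := Nat.mod_eq_of_lt hi
      simp only [hEd, h0]
    have hv : cw.getVert ((i + 1) % n) = cw.getVert (i + 1) := by
      rcases Nat.lt_or_ge (i + 1) n with h1 | h1
      · rw [Nat.mod_eq_of_lt h1]
      · have heq : i + 1 = n := by omega
        rw [heq, Nat.mod_self, Walk.getVert_zero, hn, Walk.getVert_length]
    have hgv2 : (Ed (i + 1)) = ((cw.getVert (i + 1) : {e : G.edgeSet | (e : Sym2 V) ∈ M}) : G.edgeSet) := by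
      simp only [hEd]
      exact congrArg _ hv
    rw [hgv, hgv2]
    exact SimpleGraph.comap_adj.mp hadj
  have key : ∀ i, i < n →
      EdgeDisjoint (Ed i : Sym2 V) (Ed (i + 1)) ∧ OppC4 G (Ed i) (Ed (i + 1)) := by
    intro i hi
    have := hFadj i hi
    rw [Fgraph, SimpleGraph.fromRel_adj] at this
    rcases this.2 with ⟨h1, h2⟩ | ⟨h1, h2⟩
    · exact ⟨h1, h2⟩
    · exact ⟨fun v hv hv' => h1 v hv' hv, oppC4_symm h2⟩
  -- crossing adjacencies
  have keyAdj : ∀ i, i < n → G.Adj (U i) (Wv (i + 1)) ∧ G.Adj (Wv i) (U (i + 1)) := by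
    intro i hi
    obtain ⟨hdisj, a, b, a', b', ⟨n1, n2, n3, n4, n5, n6, Aab, Aba', Aa'b', Ab'a⟩, hab, hcd⟩ :=
      key i hi
    have heq1 : s(U i, Wv i) = s(a, b) := (hsf (Ed i)).symm.trans hab
    have heq2 : s(U (i+1), Wv (i+1)) = s(a', b') := (hsf (Ed (i+1))).symm.trans hcd
    have p1 : col (U i) = 0 := hUc (Ed i)
    have p2 : col (Wv i) = 1 := hWc (Ed i)
    have q1 : col (U (i+1)) = 0 := hUc (Ed (i+1))
    have q2 : col (Wv (i+1)) = 1 := hWc (Ed (i+1))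
    rw [Sym2.eq_iff] at heq1 heq2
    rcases heq1 with ⟨ha, hb⟩ | ⟨ha, hb⟩ <;> rcases heq2 with ⟨hc, hd⟩ | ⟨hc, hd⟩ <;>
      subst ha <;> subst hb <;> subst hc <;> subst hd
    · exact ⟨Ab'a.symm, Aba'⟩
    · exact absurd (p2.trans q2.symm) (col.valid Aba')
    · exact absurd (p1.trans q1.symm) (col.valid Aba')
    · exact ⟨Aba', Ab'a.symm⟩
  have keyAdj' : ∀ i, G.Adj (U i) (Wv (i + 1)) ∧ G.Adj (Wv i) (U (i + 1)) := by
    intro i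
    have h0 := keyAdj (i % n) (Nat.mod_lt _ hn0)
    have e1 : U (i % n) = U i := congrArg Uf (hEd_mod i)
    have e2 : Wv (i % n) = Wv i := congrArg Wf (hEd_mod i)
    have e3 : U (i % n + 1) = U (i + 1) := congrArg Uf (hEd_shift i)
    have e4 : Wv (i % n + 1) = Wv (i + 1) := congrArg Wf (hEd_shift i)
    rw [e1, e2, e3, e4] at h0
    exact h0
  -- the rim of the Möbius ladder
  set R : ℕ → V := fun p => if p % 2 = 0 then U p else Wv p with hR
  have hrim : ∀ p, G.Adj (R p) (R (p + 1)) := by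
    intro p
    by_cases hp : p % 2 = 0
    · have hp1 : ¬ ((p + 1) % 2 = 0) := by omega
      simp only [hR, hp, if_pos, hp1, if_neg, if_true, if_false]
      exact (keyAdj' p).1
    · have hp1 : (p + 1) % 2 = 0 := by omega
      simp only [hR, hp, hp1, if_neg, if_pos, if_true, if_false]
      exact (keyAdj' p).2
  have hrung : ∀ p, G.Adj (R p) (R (p + n)) := by
    intro p
    have eU : U (p + n) = U p := congrArg Uf (hEd_per p)
    have eW : Wv (p + n) = Wv p := congrArg Wf (hEd_per p)
    by_cases hp : p % 2 = 0
    · have hp1 : ¬ ((p + n) % 2 = 0) := by omega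
      simp only [hR, hp, hp1, if_pos, if_neg, if_true, if_false]
      rw [eW]
      exact hadjf (Ed p)
    · have hp1 : (p + n) % 2 = 0 := by omega
      simp only [hR, hp, hp1, if_pos, if_neg, if_true, if_false]
      rw [eU]
      exact (hadjf (Ed p)).symm
  have hmemE : ∀ p, R p ∈ (Ed p : Sym2 V) := by
    intro p
    rw [hsf (Ed p)]
    by_cases hp : p % 2 = 0 <;> simp [hR, hp]
    · exact Or.inl rfl
    · exact Or.inr rfl
  have hcolR : ∀ p, col (R p) = if p % 2 = 0 then 0 else 1 := by
    intro p
    by_cases hp : p % 2 = 0 <;> simp only [hR, hp, if_pos, if_neg, if_true, if_false]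
    · exact hUc (Ed p)
    · exact hWc (Ed p)
  -- injectivity of the rim
  have hRinj : ∀ p q, p < 2 * n → q < 2 * n → R p = R q → p = q := by
    intro p q hp hq hRpq
    have hpar : p % 2 = q % 2 := by
      by_contra hne
      have := congrArg col hRpq
      rw [hcolR, hcolR] at this
      by_cases h1 : p % 2 = 0 <;> by_cases h2 : q % 2 = 0 <;>
        simp only [h1, h2, if_pos, if_neg, if_true, if_false] at this <;>
        first
          | omega
          | exact absurd this (by decide)
    have hEpq : Ed p = Ed q := by
      by_contra hne
      have hnee : (Ed p : Sym2 V) ≠ (Ed q : Sym2 V) := fun hh => hne (Subtype.ext hh)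
      have hdisj := hmatch _ (hEM p) _ (hEM q) hnee
      exact hdisj (R p) (hmemE p) (hRpq ▸ hmemE q)
    have hgv : (cw.getVert (p % n) : {e : G.edgeSet | (e : Sym2 V) ∈ M})
        = cw.getVert (q % n) := by
      apply Subtype.coe_injective
      exact hEpq
    have hmodn : p % n = q % n :=
      cycle_getVert_inj hcyc (Nat.mod_lt _ hn0) (Nat.mod_lt _ hn0) hgv
    rcases le_total p q with hle | hle
    · have hdvd : n ∣ q - p := (Nat.modEq_iff_dvd' hle).mp hmodn
      obtain ⟨k, hk⟩ := hdvd
      have hklt : k < 2 := by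
        by_contra hge
        have h2 : n * 2 ≤ n * k := Nat.mul_le_mul_left n (by omega)
        omega
      interval_cases k <;> omega
    · have hdvd : n ∣ p - q := (Nat.modEq_iff_dvd' hle).mp hmodn.symm
      obtain ⟨k, hk⟩ := hdvd
      have hklt : k < 2 := by
        by_contra hge
        have h2 : n * 2 ≤ n * k := Nat.mul_le_mul_left n (by omega)
        omega
      interval_cases k <;> omega
  -- the K3,3 minor
  have hR2n : R (2 * n) = R 0 := by
    have hE : Ed (2 * n) = Ed 0 := by
      have h0 : 2 * n % n = 0 % n := by simp [Nat.mul_mod_left, Nat.mul_mod_right]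
      simp only [hEd, h0]
    have h2 : (2 * n) % 2 = 0 := by omega
    simp only [hR, h2, Nat.zero_mod, if_pos, if_true]
    exact congrArg Uf hE
  obtain ⟨lo, hlo⟩ : ∃ lo : Fin 3 ⊕ Fin 3 → ℕ, lo = fun w => match w with
    | .inl 0 => 0 | .inl 1 => 2 | .inl 2 => n + 1
    | .inr 0 => 1 | .inr 1 => 3 | .inr 2 => n + 2 := ⟨_, rfl⟩
  obtain ⟨hi, hhi⟩ : ∃ hi : Fin 3 ⊕ Fin 3 → ℕ, hi = fun w => match w with
    | .inl 0 => 0 | .inl 1 => 2 | .inl 2 => n + 1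
    | .inr 0 => 1 | .inr 1 => n | .inr 2 => 2 * n - 1 := ⟨_, rfl⟩
  have hlohi : ∀ w, lo w ≤ hi w ∧ hi w < 2 * n := by
    rintro (i | i) <;> fin_cases i <;> simp only [hlo, hhi] <;> omega
  have hdisj2 : ∀ w1 w2 : Fin 3 ⊕ Fin 3, w1 ≠ w2 → hi w1 < lo w2 ∨ hi w2 < lo w1 := by
    intro w1 w2 hne
    rcases w1 with i | i <;> rcases w2 with j | j <;> fin_cases i <;> fin_cases j <;>
      simp only [hlo, hhi] <;> first | (exact absurd rfl hne) | omega
  have hminor : HasMinor G (completeBipartiteGraph (Fin 3) (Fin 3)) := by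
    refine ⟨fun w => R '' Set.Icc (lo w) (hi w), ?_, ?_, ?_⟩
    · intro w
      exact induce_path_connected G R (lo w) (hi w) (hlohi w).1 (fun p _ _ => hrim p)
    · intro w1 w2 hne
      rw [Set.disjoint_left]
      rintro x ⟨p, hp, rfl⟩ ⟨q, hq, hxq⟩
      rw [Set.mem_Icc] at hp hq
      have hqp : q = p := hRinj q p
        (by have h1 := (hlohi w2).2; omega) (by have h1 := (hlohi w1).2; omega) hxq
      subst hqp
      rcases hdisj2 w1 w2 hne with h | h <;> omega
    · have aux : ∀ i j : Fin 3, ∃ v₁ ∈ R '' Set.Icc (lo (.inl i)) (hi (.inl i)),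
          ∃ v₂ ∈ R '' Set.Icc (lo (.inr j)) (hi (.inr j)), G.Adj v₁ v₂ := by
        intro i j
        fin_cases i <;> fin_cases j
        · exact ⟨R 0, ⟨0, by simp only [hlo, hhi, Set.mem_Icc]; omega, rfl⟩, R 1, ⟨1, by simp only [hlo, hhi, Set.mem_Icc]; omega, rfl⟩, by simpa using hrim 0⟩
        · refine ⟨R 0, ⟨0, by simp only [hlo, hhi, Set.mem_Icc]; omega, rfl⟩, R n, ⟨n, by simp only [hlo, hhi, Set.mem_Icc]; omega, rfl⟩, ?_⟩
          simpa using hrung 0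
        · refine ⟨R 0, ⟨0, by simp only [hlo, hhi, Set.mem_Icc]; omega, rfl⟩, R (2 * n - 1),
            ⟨2 * n - 1, by simp only [hlo, hhi, Set.mem_Icc]; omega, rfl⟩, ?_⟩
          have h1 := hrim (2 * n - 1)
          rw [show 2 * n - 1 + 1 = 2 * n by omega, hR2n] at h1
          exact h1.symm
        · exact ⟨R 2, ⟨2, by simp only [hlo, hhi, Set.mem_Icc]; omega, rfl⟩, R 1, ⟨1, by simp only [hlo, hhi, Set.mem_Icc]; omega, rfl⟩, (hrim 1).symm⟩
        · refine ⟨R 2, ⟨2, by simp only [hlo, hhi, Set.mem_Icc]; omega, rfl⟩, R 3, ⟨3, by simp only [hlo, hhi, Set.mem_Icc]; omega, rfl⟩, ?_⟩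
          simpa using hrim 2
        · refine ⟨R 2, ⟨2, by simp only [hlo, hhi, Set.mem_Icc]; omega, rfl⟩, R (n + 2),
            ⟨n + 2, by simp only [hlo, hhi, Set.mem_Icc]; omega, rfl⟩, ?_⟩
          have h1 := hrung 2
          rw [show 2 + n = n + 2 by omega] at h1
          exact h1
        · refine ⟨R (n + 1), ⟨n + 1, by simp only [hlo, hhi, Set.mem_Icc]; omega, rfl⟩, R 1, ⟨1, by simp only [hlo, hhi, Set.mem_Icc]; omega, rfl⟩, ?_⟩
          have h1 := hrung 1
          rw [show 1 + n = n + 1 by omega] at h1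
          exact h1.symm
        · refine ⟨R (n + 1), ⟨n + 1, by simp only [hlo, hhi, Set.mem_Icc]; omega, rfl⟩, R n,
            ⟨n, by simp only [hlo, hhi, Set.mem_Icc]; omega, rfl⟩, (hrim n).symm⟩
        · exact ⟨R (n + 1), ⟨n + 1, by simp only [hlo, hhi, Set.mem_Icc]; omega, rfl⟩, R (n + 2),
            ⟨n + 2, by simp only [hlo, hhi, Set.mem_Icc]; omega, rfl⟩, hrim (n + 1)⟩
      intro w1 w2 hadj
      rcases w1 with i | i <;> rcases w2 with j | j
      · simp at hadj
      · exact aux i j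
      · obtain ⟨v1, h1, v2, h2, ha⟩ := aux j i
        exact ⟨v2, h2, v1, h1, ha.symm⟩
      · simp at hadj
  exact hG.2 hminor
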